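/- Let A and B be n-by-n weighted shift matrices (n ≥ 3) with weights a_1, …, a_n and b_1, …, b_n respectively, and suppose |a_j| = |b_j| for all 1 ≤ j ≤ n. Then for every integer k with 0 ≤ k < n, the matrix A is unitarily equivalent to e^{iψ_k}·B, where ψ_k = (2kπ + Σ_{j=1}^n (arg a_j − arg b_j))/n and arg denotes the principal argument (with arg 0 = 0). -/

import Mathlib

open Matrix

/-- The n-by-n weighted shift matrix with weights `a 0, …, a (n-1)`
(representing `a_1, …, a_n`): the `(i, i+1)` entry is `a i` (cyclically). -/
def wsMatrix {n : ℕ} (a : Fin n → ℂ) : Matrix (Fin n) (Fin n) ℂ :=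
  fun i j => if (j : ℕ) = ((i : ℕ) + 1) % n then a i else 0

/-- Two square complex matrices are unitarily equivalent if `B = U* A U`
for some unitary `U`. -/
def UnitarilyEquiv {n : ℕ} (A B : Matrix (Fin n) (Fin n) ℂ) : Prop :=
  ∃ U : Matrix (Fin n) (Fin n) ℂ, U ∈ Matrix.unitaryGroup (Fin n) ℂ ∧ B = Uᴴ * A * U

theorem stmt1 (n : ℕ) (hn : 3 ≤ n) (a b : Fin n → ℂ)
    (hab : ∀ j, ‖a j‖ = ‖b j‖)
    (k : ℕ) (hk : k < n) :
    UnitarilyEquiv (wsMatrix a)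
      (Complex.exp
          ((((2 * k * Real.pi + ∑ j, (Complex.arg (a j) - Complex.arg (b j))) / n : ℝ) : ℂ) *
            Complex.I) • wsMatrix b) := by
  have hn0 : (n : ℝ) ≠ 0 := by positivity
  set S : ℝ := ∑ j, (Complex.arg (a j) - Complex.arg (b j)) with hS
  set ψ : ℝ := (2 * k * Real.pi + S) / n with hψ
  have hψn : ψ * n = 2 * k * Real.pi + S := by
    rw [hψ]; field_simp
  set c : ℕ → ℝ := fun j => if h : j < n then
      ψ + Complex.arg (b ⟨j, h⟩) - Complex.arg (a ⟨j, h⟩) else 0 with hc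
  set θ : ℕ → ℝ := fun m => ∑ j ∈ Finset.range m, c j with hθ
  have hcf : ∀ i : Fin n, c i = ψ + Complex.arg (b i) - Complex.arg (a i) := by
    intro i
    simp only [hc, i.isLt, dif_pos, Fin.eta]
  have hθn : θ n = 2 * k * Real.pi := by
    have h1 : θ n = ∑ j : Fin n, c j := (Finset.sum_range fun j => c j)
    have h2 : ∑ j : Fin n, c (j : ℕ) = n * ψ - S := by
      rw [Finset.sum_congr rfl fun j _ => hcf j]
      have : ∀ j : Fin n, ψ + Complex.arg (b j) - Complex.arg (a j)
          = ψ - (Complex.arg (a j) - Complex.arg (b j)) := fun j => by ring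
      rw [Finset.sum_congr rfl fun j _ => this j, Finset.sum_sub_distrib,
        Finset.sum_const, Finset.card_univ, Fintype.card_fin, ← hS, nsmul_eq_mul]
    rw [h1, h2]
    linarith [hψn]
  set d : Fin n → ℂ := fun i => Complex.exp (θ i * Complex.I) with hd
  have hstar : ∀ x : ℝ, (starRingEnd ℂ) (Complex.exp ((x:ℂ) * Complex.I))
      = Complex.exp ((-x : ℝ) * Complex.I) := by
    intro x
    rw [← Complex.exp_conj]
    simp
  refine ⟨Matrix.diagonal d, ?_, ?_⟩
  · rw [Matrix.mem_unitaryGroup_iff']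
    rw [Matrix.star_eq_conjTranspose, Matrix.diagonal_conjTranspose,
      Matrix.diagonal_mul_diagonal]
    ext i j
    rw [Matrix.diagonal_apply, Matrix.one_apply]
    by_cases h : i = j
    · simp only [h, if_pos rfl, Pi.mul_apply, Pi.star_apply, hd]
      show (starRingEnd ℂ) _ * _ = 1
      rw [hstar, ← Complex.exp_add]
      rw [show ((-θ j : ℝ) : ℂ) * Complex.I + (θ j : ℝ) * Complex.I = 0 by push_cast; ring]
      exact Complex.exp_zero
    · simp [h]
  · have key : ∀ i j : Fin n, (j : ℕ) = ((i : ℕ) + 1) % n →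
        Complex.exp ((ψ : ℂ) * Complex.I) * b i
          = Complex.exp ((-(θ i) : ℝ) * Complex.I) * a i
              * Complex.exp ((θ j : ℝ) * Complex.I) := by
      intro i j hj
      by_cases ha : a i = 0
      · have hb : b i = 0 := by
          have := hab i; rw [ha] at this; simpa using this.symm
        simp [ha, hb]
      · have hθij : ∃ m : ℤ, θ j - θ i
            = ψ + Complex.arg (b i) - Complex.arg (a i) + m * (2 * Real.pi) := by
          by_cases hlt : (i : ℕ) + 1 < n
          · refine ⟨0, ?_⟩
            have hjv : (j : ℕ) = (i : ℕ) + 1 := by rw [hj, Nat.mod_eq_of_lt hlt]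
            have : θ ((i : ℕ) + 1) = θ i + c i := Finset.sum_range_succ c i
            rw [hjv, this, hcf i]
            push_cast
            ring
          · refine ⟨-(k : ℤ), ?_⟩
            have hin : (i : ℕ) + 1 = n := by omega
            have hjv : (j : ℕ) = 0 := by rw [hj, hin, Nat.mod_self]
            have h1 : θ ((i : ℕ) + 1) = θ i + c i := Finset.sum_range_succ c i
            rw [hin] at h1
            have hθ0 : θ 0 = 0 := Finset.sum_range_zero c
            rw [hjv, hθ0, hcf i] at *
            push_cast
            linarith [hθn, h1]
        obtain ⟨m, hm⟩ := hθij
        have hmC : (θ j : ℂ) - θ i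
            = (ψ : ℂ) + Complex.arg (b i) - Complex.arg (a i) + m * (2 * Real.pi) := by
          exact_mod_cast congrArg (Complex.ofReal) hm
        have hbi : b i = (‖a i‖ : ℂ)
            * Complex.exp ((Complex.arg (b i) : ℂ) * Complex.I) := by
          rw [hab i]; exact (Complex.norm_mul_exp_arg_mul_I (b i)).symm
        have hai : a i = (‖a i‖ : ℂ)
            * Complex.exp ((Complex.arg (a i) : ℂ) * Complex.I) :=
          (Complex.norm_mul_exp_arg_mul_I (a i)).symm
        have hexp : Complex.exp ((-(θ i) : ℝ) * Complex.I)
              * Complex.exp ((Complex.arg (a i) : ℂ) * Complex.I)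
              * Complex.exp ((θ j : ℝ) * Complex.I)
            = Complex.exp ((ψ : ℂ) * Complex.I)
              * Complex.exp ((Complex.arg (b i) : ℂ) * Complex.I) := by
          rw [← Complex.exp_add, ← Complex.exp_add, ← Complex.exp_add,
            Complex.exp_eq_exp_iff_exists_int]
          refine ⟨m, ?_⟩
          push_cast
          push_cast at hmC
          linear_combination Complex.I * hmC
        rw [hbi]; nth_rewrite 2 [hai]
        linear_combination (-(‖a i‖) : ℂ) * hexp
    ext i j
    rw [Matrix.smul_apply, Matrix.diagonal_conjTranspose, Matrix.mul_diagonal,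
      Matrix.diagonal_mul]
    simp only [Pi.star_apply, wsMatrix, smul_eq_mul]
    by_cases hj : (j : ℕ) = ((i : ℕ) + 1) % n
    · rw [if_pos hj, if_pos hj]
      have hkey := key i j hj
      show Complex.exp _ * b i = star (d i) * (a i) * d j
      rw [hd]
      show _ = (starRingEnd ℂ) _ * _ * _
      rw [hstar]
      exact hkey
    · simp [hj]
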